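/- Let F be a field and A a unital associative F-algebra carrying a coassociative counital F-coalgebra structure with comultiplication Δ and counit ε, such that Δ(1) = 1 ⊗ 1. Let β : A × A → F be a compatible pairing with β(a, 1) = ε(a) for all a ∈ A and β(x, x) ≠ 0 for all x ≠ 0. Let V = Prim(A), and suppose that for every k ≥ 0, Δ(V^k) ⊆ Σ_{i=0}^{k} V^{k-i} ⊗ V^{i} (viewed as subspaces of A ⊗ A, with V^0 = F·1). Then β(V^ℓ, V^k) = 0 for all 0 ≤ k < ℓ, and the family of subspaces (V^k)_{k≥0} is independent, i.e. the sum Σ_{k≥0} V^k is direct. -/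

import Mathlib

open TensorProduct

/-- The subspace of primitive elements of `A`: those `x` with
`Δ(x) = x ⊗ 1 + 1 ⊗ x`. -/
def PrimSubmodule (F A : Type*) [Field F] [Ring A] [Algebra F A]
    [Coalgebra F A] : Submodule F A where
  carrier := {x | Coalgebra.comul x = x ⊗ₜ[F] (1 : A) + (1 : A) ⊗ₜ[F] x}
  add_mem' := by
    intro a b ha hb
    simp only [Set.mem_setOf_eq] at *
    rw [map_add, ha, hb, TensorProduct.add_tmul, TensorProduct.tmul_add]
    abel
  zero_mem' := by simp
  smul_mem' := by
    intro c a ha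
    simp only [Set.mem_setOf_eq] at *
    rw [map_smul, ha, smul_add, TensorProduct.smul_tmul', ← TensorProduct.tmul_smul]

/-- Let `A` be a unital `F`-algebra and `F`-coalgebra with
`Δ(1) = 1 ⊗ 1`, `β` a compatible anisotropic pairing with `β(a, 1) = ε(a)`, and
`V = Prim(A)`. If `Δ(V^k) ⊆ Σ_{i=0}^{k} V^{k-i} ⊗ V^i` for every `k`, then
`β(V^ℓ, V^k) = 0` for all `0 ≤ k < ℓ` and the sum `Σ_{k ≥ 0} V^k` is direct. -/
theorem statement14 (F A : Type*) [Field F] [Ring A] [Algebra F A] [Coalgebra F A]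
    (hone : Coalgebra.comul (1 : A) = (1 : A) ⊗ₜ[F] (1 : A))
    (β : A →ₗ[F] A →ₗ[F] F)
    -- compatibility: `β(a·a', c) = Σ β(a, c₍₂₎)·β(a', c₍₁₎)`
    (hmul : ∀ a a' c : A, β (a * a') c =
      TensorProduct.lift ((LinearMap.mul F F).compl₁₂ (β a') (β a))
        (Coalgebra.comul c))
    -- `ε(c) = β(1, c)`
    (hcounit : ∀ c : A, Coalgebra.counit c = β 1 c)
    -- `β(a, 1) = ε(a)`
    (hright : ∀ a : A, β a 1 = Coalgebra.counit a)
    -- anisotropy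
    (haniso : ∀ x : A, x ≠ 0 → β x x ≠ 0)
    -- `Δ(V^k) ⊆ Σ_{i=0}^{k} V^{k-i} ⊗ V^i`
    (hΔpow : ∀ k : ℕ, ∀ x ∈ (PrimSubmodule F A) ^ k, Coalgebra.comul x ∈
      ⨆ i : Fin (k + 1),
        Submodule.map₂ (TensorProduct.mk F A A)
          ((PrimSubmodule F A) ^ (k - (i : ℕ))) ((PrimSubmodule F A) ^ (i : ℕ))) :
    (∀ k l : ℕ, k < l →
      ∀ x ∈ (PrimSubmodule F A) ^ l, ∀ y ∈ (PrimSubmodule F A) ^ k, β x y = 0)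
    ∧ iSupIndep (fun k : ℕ => (PrimSubmodule F A) ^ k) := by
  -- ε vanishes on primitives
  have heps : ∀ v ∈ PrimSubmodule F A, Coalgebra.counit (R := F) v = 0 := by
    intro v hv
    by_cases h1 : (1 : A) = 0
    · have hv0 : v = 0 := by
        have : v = v * 1 := (mul_one v).symm
        rw [this, h1, mul_zero]
      rw [hv0, map_zero]
    · have hv' : Coalgebra.comul (R := F) v = v ⊗ₜ[F] 1 + 1 ⊗ₜ[F] v := hv
      have h2 := Coalgebra.rTensor_counit_comul (R := F) v
      rw [hv'] at h2
      have h3 := congrArg (TensorProduct.lid F A) h2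
      simp only [map_add, LinearMap.rTensor_tmul, TensorProduct.lid_tmul] at h3
      have h4 := Coalgebra.rTensor_counit_comul (R := F) (1 : A)
      rw [hone] at h4
      have h5 := congrArg (TensorProduct.lid F A) h4
      simp only [LinearMap.rTensor_tmul, TensorProduct.lid_tmul, one_smul] at h5
      -- h5 : counit 1 • 1 = 1
      have heps1 : Coalgebra.counit (R := F) (1 : A) = 1 := by
        have : (Coalgebra.counit (R := F) (1 : A) - 1) • (1 : A) = 0 := by
          rw [sub_smul, one_smul, h5, sub_self]
        rcases smul_eq_zero.mp this with h | h
        · exact sub_eq_zero.mp h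
        · exact absurd h h1
      rw [heps1, one_smul] at h3
      -- h3 : counit v • 1 + v = v
      have h6 : Coalgebra.counit (R := F) v • (1 : A) = 0 := by
        have h7 : Coalgebra.counit (R := F) v • (1 : A) = v - v := by
          rw [eq_sub_iff_add_eq]; exact h3
        rw [h7, sub_self]
      rcases smul_eq_zero.mp h6 with h | h
      · exact h
      · exact absurd h h1
  set V := PrimSubmodule F A with hVdef
  -- β(V^1, V^0) = 0 base fact
  have hβ1 : ∀ v ∈ V, ∀ y ∈ V ^ (0 : ℕ), β v y = 0 := by
    intro v hv y hy
    rw [pow_zero] at hy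
    obtain ⟨c, rfl⟩ := Submodule.mem_one.mp hy
    rw [Algebra.algebraMap_eq_smul_one, map_smul, smul_eq_mul, hright, heps v hv, mul_zero]
  -- main orthogonality
  have hortho : ∀ l, ∀ k < l, ∀ x ∈ V ^ l, ∀ y ∈ V ^ k, β x y = 0 := by
    intro l
    induction l with
    | zero => intro k hk; omega
    | succ n ih =>
      intro k hk x hx y hy
      rw [pow_succ] at hx
      refine Submodule.mul_induction_on hx (fun m hm v hv => ?_)
        (fun a b ha hb => by rw [map_add, LinearMap.add_apply, ha, hb, add_zero])
      rw [hmul m v y]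
      have hsub : (⨆ i : Fin (k + 1),
          Submodule.map₂ (TensorProduct.mk F A A) (V ^ (k - (i : ℕ))) (V ^ (i : ℕ))) ≤
          LinearMap.ker (TensorProduct.lift ((LinearMap.mul F F).compl₁₂ (β v) (β m))) := by
        refine iSup_le fun i => Submodule.map₂_le.mpr fun p hp q hq => ?_
        simp only [LinearMap.mem_ker, TensorProduct.mk_apply, TensorProduct.lift.tmul,
          LinearMap.compl₁₂_apply, LinearMap.mul_apply']
        rcases Nat.lt_or_ge (i : ℕ) k with hik | hik
        · rw [ih (i : ℕ) (by omega) m hm q hq, mul_zero]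
        · have h0 : k - (i : ℕ) = 0 := by omega
          rw [h0] at hp
          rw [hβ1 v hv p (by rwa [pow_zero]), zero_mul]
      exact hsub (hΔpow k y hy)
  refine ⟨fun k l hkl x hx y hy => hortho l k hkl x hx y hy, ?_⟩
  -- independence
  apply iSupIndep_of_dfinsupp_lsum_injective
  show Function.Injective (DFinsupp.lsum F fun i => (V ^ i).subtype)
  refine (injective_iff_map_eq_zero _).mpr fun w hw => (LinearMap.ker_eq_bot'.mp ?_) w hw
  rw [eq_bot_iff]
  intro w hw
  simp only [SetLike.mem_coe, LinearMap.mem_ker] at hw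
  rw [Submodule.mem_bot]
  classical
  by_contra hne
  have hsupp : w.support.Nonempty := by
    rw [Finset.nonempty_iff_ne_empty]
    intro h
    exact hne (DFinsupp.support_eq_empty.mp h)
  set m := w.support.max' hsupp with hm
  have hmem : m ∈ w.support := Finset.max'_mem _ _
  have hwm : (w m : A) ≠ 0 := by
    intro h
    exact (DFinsupp.mem_support_iff.mp hmem) (Subtype.ext h)
  have hsum : ∑ j ∈ w.support, ((w j : A)) = 0 := by
    have := hw
    rwa [DFinsupp.lsum_apply_apply, DFinsupp.sumAddHom_apply] at this
  have hzero : β (w m) (w m) = 0 := by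
    have h1 : β (w m) (∑ j ∈ w.support, ((w j : A))) = 0 := by rw [hsum, map_zero]
    rw [Finset.sum_eq_add_sum_sdiff_singleton_of_mem hmem, map_add] at h1
    have h2 : ∀ j ∈ w.support \ {m}, β (w m) (w j) = 0 := by
      intro j hj
      rw [Finset.mem_sdiff, Finset.mem_singleton] at hj
      have hjlt : j < m := lt_of_le_of_ne (Finset.le_max' _ _ hj.1) hj.2
      exact hortho m j hjlt (w m) (w m).2 (w j) (w j).2
    rw [map_sum, Finset.sum_eq_zero h2, add_zero] at h1
    exact h1
  exact haniso _ hwm hzero
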